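/- Let h_k and κ_k be as in the perspective observation model, Q ∈ Mat₂(ℝ) symmetric, and y_k ∈ ℝ². Define f(E) = (1/2)‖y_k − h_k(E)‖²_Q = (1/2)(y_k − h_k(E))ᵀQ(y_k − h_k(E)). Then for η₁ ∈ se(3), the directional derivative of f at E along the curve t ↦ E·exp(tη₁) (equivalently in direction Eη₁) equals trace(A_k(E)ᵀ η₁), where A_k(E) := (κ_k⁻¹Î − κ_k⁻² Î E⁻¹ g_k (e₃⁴)ᵀ)ᵀ · Q · (y_k − h_k(E)) · g_kᵀ · E⁻ᵀ. -/

import Mathlib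

open Matrix

attribute [local instance] Matrix.normedAddCommGroup Matrix.normedSpace

/-- Membership in `𝔰𝔢(3)`. -/
def isSe3 (A : Matrix (Fin 4) (Fin 4) ℝ) : Prop :=
  (∀ i j : Fin 3, A i.castSucc j.castSucc = - A j.castSucc i.castSucc) ∧
  (∀ j : Fin 4, A 3 j = 0)

/-- `Î ∈ ℝ^{2×4}` selecting the first two coordinates. -/
noncomputable def Ihat : Matrix (Fin 2) (Fin 4) ℝ := !![1, 0, 0, 0; 0, 1, 0, 0]

/-- Third standard basis vector `e₃⁴` of `ℝ⁴`. -/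
noncomputable def e3vec : Fin 4 → ℝ := Pi.single (2 : Fin 4) 1

/-- `κ_k(E) = (e₃⁴)ᵀ E⁻¹ g_k`. -/
noncomputable def kappa (E : Matrix (Fin 4) (Fin 4) ℝ) (g : Fin 4 → ℝ) : ℝ :=
  e3vec ⬝ᵥ (E⁻¹ *ᵥ g)

/-- The perspective observation `h_k(E) = κ_k(E)⁻¹ · Î E⁻¹ g_k`. -/
noncomputable def hObs (E : Matrix (Fin 4) (Fin 4) ℝ) (g : Fin 4 → ℝ) : Fin 2 → ℝ :=
  (kappa E g)⁻¹ • ((Ihat * E⁻¹) *ᵥ g)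

/-- `f(E) = (1/2)‖y − h_k(E)‖²_Q`. -/
noncomputable def fobs (Q : Matrix (Fin 2) (Fin 2) ℝ) (y : Fin 2 → ℝ) (g : Fin 4 → ℝ)
    (E : Matrix (Fin 4) (Fin 4) ℝ) : ℝ :=
  (1 / 2 : ℝ) * ((y - hObs E g) ⬝ᵥ (Q *ᵥ (y - hObs E g)))

/-- `A_k(E) = (κ⁻¹Î − κ⁻² ÎE⁻¹g(e₃⁴)ᵀ)ᵀ · Q · (y − h_k(E)) · gᵀE⁻ᵀ`. -/
noncomputable def Ak (Q : Matrix (Fin 2) (Fin 2) ℝ) (y : Fin 2 → ℝ) (g : Fin 4 → ℝ)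
    (E : Matrix (Fin 4) (Fin 4) ℝ) : Matrix (Fin 4) (Fin 4) ℝ :=
  ((kappa E g)⁻¹ • Ihat
      - (kappa E g ^ 2)⁻¹ • Matrix.vecMulVec ((Ihat * E⁻¹) *ᵥ g) e3vec)ᵀ *
    (Q * Matrix.vecMulVec (y - hObs E g) (E⁻¹ *ᵥ g))

section entry
attribute [-instance] Matrix.normedAddCommGroup Matrix.normedSpace
attribute [local instance] Matrix.linftyOpNormedRing Matrix.linftyOpNormedAlgebra

lemma expEntry (η : Matrix (Fin 4) (Fin 4) ℝ) (i j : Fin 4) :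
    HasDerivAt (fun t : ℝ => NormedSpace.exp (t • η) i j) (η i j) 0 := by
  have h := hasDerivAt_exp_smul_const (𝕂 := ℝ) η (0 : ℝ)
  rw [zero_smul, NormedSpace.exp_zero, one_mul] at h
  let L : Matrix (Fin 4) (Fin 4) ℝ →ₗ[ℝ] ℝ :=
    (LinearMap.proj j).comp (LinearMap.proj (R := ℝ) (φ := fun _ : Fin 4 => Fin 4 → ℝ) i)
  exact (L.toContinuousLinearMap.hasFDerivAt.comp_hasDerivAt 0 h :)

end entry

lemma fexp (Q : Matrix (Fin 2) (Fin 2) ℝ) (y : Fin 2 → ℝ) (u : Fin 4 → ℝ) :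
    (1/2:ℝ) * ((y - (e3vec ⬝ᵥ u)⁻¹ • (Ihat *ᵥ u)) ⬝ᵥ (Q *ᵥ (y - (e3vec ⬝ᵥ u)⁻¹ • (Ihat *ᵥ u)))) =
    (1/2:ℝ) * ((y 0 - u 0 / u 2) * (Q 0 0 * (y 0 - u 0 / u 2) + Q 0 1 * (y 1 - u 1 / u 2))
      + (y 1 - u 1 / u 2) * (Q 1 0 * (y 0 - u 0 / u 2) + Q 1 1 * (y 1 - u 1 / u 2))) := by
  have he : e3vec ⬝ᵥ u = u 2 := by simp [e3vec, single_dotProduct]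
  rw [he]
  simp only [dotProduct, Matrix.mulVec, Fin.sum_univ_two, Fin.sum_univ_four,
    Pi.sub_apply, Pi.smul_apply, smul_eq_mul, Ihat,
    Matrix.cons_val', Matrix.cons_val_zero, Matrix.cons_val_one, Matrix.head_cons,
    Matrix.of_apply, Matrix.empty_val', Matrix.cons_val_fin_one, Matrix.head_fin_const,
    Matrix.cons_val_two, Matrix.cons_val_three, Matrix.tail_cons,
    div_eq_mul_inv]
  ring

set_option maxHeartbeats 1000000 in
/-- The directional derivative of `f(E) = (1/2)‖y_k − h_k(E)‖²_Q` along `t ↦ E·exp(tη₁)`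
equals `trace(A_k(E)ᵀη₁)`. -/
theorem stmt8 (E η₁ : Matrix (Fin 4) (Fin 4) ℝ) (g : Fin 4 → ℝ) (y : Fin 2 → ℝ)
    (Q : Matrix (Fin 2) (Fin 2) ℝ) (hQ : Qᵀ = Q)
    (hE : IsUnit E.det) (hκ : kappa E g ≠ 0) (hη : isSe3 η₁) :
    HasDerivAt (fun t : ℝ => fobs Q y g (E * NormedSpace.exp (t • η₁)))
      (Matrix.trace ((Ak Q y g E)ᵀ * η₁)) 0 := by
  set w : Fin 4 → ℝ := E⁻¹ *ᵥ g with hwdef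
  have hw2 : w 2 = kappa E g := by
    simp [kappa, e3vec, single_dotProduct, ← hwdef]
  have hw2ne : w 2 ≠ 0 := hw2 ▸ hκ
  have hvi : ∀ i : Fin 4, HasDerivAt (fun t : ℝ => (NormedSpace.exp (t • -η₁) *ᵥ w) i)
      (-(η₁ *ᵥ w) i) 0 := by
    intro i
    have h : HasDerivAt (fun t : ℝ => ∑ j, NormedSpace.exp (t • -η₁) i j * w j)
        (∑ j, (-η₁) i j * w j) 0 :=
      HasDerivAt.fun_sum fun j _ => (expEntry (-η₁) i j).mul_const (w j)
    simpa [Matrix.mulVec, dotProduct, neg_mul] using h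
  have hv0 : ∀ i : Fin 4, (NormedSpace.exp ((0:ℝ) • -η₁) *ᵥ w) i = w i := by
    intro i; rw [zero_smul, NormedSpace.exp_zero, Matrix.one_mulVec]
  have hinv : ∀ t : ℝ, (E * NormedSpace.exp (t • η₁))⁻¹ *ᵥ g
      = NormedSpace.exp (t • -η₁) *ᵥ w := by
    intro t
    rw [Matrix.mul_inv_rev, ← Matrix.mulVec_mulVec, smul_neg, Matrix.exp_neg, hwdef]
  have hk0 : (NormedSpace.exp ((0:ℝ) • -η₁) *ᵥ w) 2 ≠ 0 := by rw [hv0]; exact hw2ne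
  have hfun : ∀ t : ℝ, fobs Q y g (E * NormedSpace.exp (t • η₁)) =
      (1/2 : ℝ) * ((y 0 - (NormedSpace.exp (t • -η₁) *ᵥ w) 0 / (NormedSpace.exp (t • -η₁) *ᵥ w) 2)
          * (Q 0 0 * (y 0 - (NormedSpace.exp (t • -η₁) *ᵥ w) 0 / (NormedSpace.exp (t • -η₁) *ᵥ w) 2)
            + Q 0 1 * (y 1 - (NormedSpace.exp (t • -η₁) *ᵥ w) 1 / (NormedSpace.exp (t • -η₁) *ᵥ w) 2))
        + (y 1 - (NormedSpace.exp (t • -η₁) *ᵥ w) 1 / (NormedSpace.exp (t • -η₁) *ᵥ w) 2)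
          * (Q 1 0 * (y 0 - (NormedSpace.exp (t • -η₁) *ᵥ w) 0 / (NormedSpace.exp (t • -η₁) *ᵥ w) 2)
            + Q 1 1 * (y 1 - (NormedSpace.exp (t • -η₁) *ᵥ w) 1 / (NormedSpace.exp (t • -η₁) *ᵥ w) 2))) := by
    intro t
    rw [fobs, hObs, kappa, ← Matrix.mulVec_mulVec, hinv t]
    exact fexp Q y _
  have e0 := ((hvi 0).div (hvi 2) hk0).const_sub (y 0)
  have e1 := ((hvi 1).div (hvi 2) hk0).const_sub (y 1)
  have H := (((e0.mul ((e0.const_mul (Q 0 0)).add (e1.const_mul (Q 0 1)))).add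
      (e1.mul ((e0.const_mul (Q 1 0)).add (e1.const_mul (Q 1 1))))).const_mul (1/2 : ℝ))
  rw [funext hfun]
  refine H.congr_deriv ?_
  simp only [Pi.div_apply, Pi.add_apply]
  have hq : Q 1 0 = Q 0 1 := congrFun (congrFun hQ 0) 1
  have hIe : e3vec = ![0, 0, 1, 0] := by
    funext i; fin_cases i <;> simp [e3vec]
  have hIw : (Ihat * E⁻¹) *ᵥ g = Ihat *ᵥ w := by
    rw [← Matrix.mulVec_mulVec, hwdef]
  have hIw0 : (Ihat *ᵥ w) 0 = w 0 := by
    simp [Ihat, Matrix.mulVec, dotProduct, Fin.sum_univ_four,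
      Matrix.cons_val_zero, Matrix.cons_val_one, Matrix.head_cons,
      Matrix.cons_val_two, Matrix.cons_val_three, Matrix.tail_cons]
  have hIw1 : (Ihat *ᵥ w) 1 = w 1 := by
    simp [Ihat, Matrix.mulVec, dotProduct, Fin.sum_univ_four,
      Matrix.cons_val_zero, Matrix.cons_val_one, Matrix.head_cons,
      Matrix.cons_val_two, Matrix.cons_val_three, Matrix.tail_cons]
  have hh0 : hObs E g 0 = (w 2)⁻¹ * w 0 := by
    rw [hObs, ← hw2, hIw, Pi.smul_apply, hIw0, smul_eq_mul]
  have hh1 : hObs E g 1 = (w 2)⁻¹ * w 1 := by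
    rw [hObs, ← hw2, hIw, Pi.smul_apply, hIw1, smul_eq_mul]
  set r0 : ℝ := y 0 - (w 2)⁻¹ * w 0 with hr0
  set r1 : ℝ := y 1 - (w 2)⁻¹ * w 1 with hr1
  set q0 : ℝ := Q 0 0 * r0 + Q 0 1 * r1 with hq0
  set q1 : ℝ := Q 1 0 * r0 + Q 1 1 * r1 with hq1
  set Bv : Fin 4 → ℝ :=
    ![(w 2)⁻¹ * q0, (w 2)⁻¹ * q1, -((w 2)^2)⁻¹ * (w 0 * q0 + w 1 * q1), 0] with hBv
  have hAk : ∀ i k : Fin 4, Ak Q y g E i k = Bv i * w k := by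
    intro i k
    rw [Ak]
    simp only [Matrix.mul_apply, Matrix.transpose_apply, Matrix.sub_apply, Matrix.smul_apply,
      Matrix.vecMulVec_apply, smul_eq_mul, Fin.sum_univ_two, hIw, hIw0, hIw1, hIe, ← hw2,
      ← hwdef, Pi.sub_apply, hh0, hh1, ← hr0, ← hr1]
    fin_cases i <;>
      simp [hBv, Ihat, hq0, hq1, Matrix.cons_val_zero, Matrix.cons_val_one, Matrix.head_cons,
        Matrix.cons_val_two, Matrix.cons_val_three, Matrix.tail_cons] <;>
      ring
  have htrace : Matrix.trace ((Ak Q y g E)ᵀ * η₁) = ∑ i, Bv i * (η₁ *ᵥ w) i := by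
    rw [Matrix.trace]
    simp only [Matrix.diag_apply, Matrix.mul_apply, Matrix.transpose_apply, hAk,
      Matrix.mulVec, dotProduct]
    rw [Finset.sum_comm]
    refine Finset.sum_congr rfl fun i _ => ?_
    rw [Finset.mul_sum]
    exact Finset.sum_congr rfl fun j _ => by ring
  rw [htrace]
  simp only [hv0, Fin.sum_univ_four, hBv, Matrix.cons_val_zero, Matrix.cons_val_one,
    Matrix.head_cons, Matrix.cons_val_two, Matrix.cons_val_three, Matrix.tail_cons,
    hq0, hq1, hr0, hr1, hq]
  field_simp
  ring
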